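/- Let α > β ≥ 3 be integers. In ℚ³ set v₀ = (−1, α, β), v₁ = (1, 0, 0), e₂ = (0, 0, 1), and let m = (1, (2−β)/α, 1), so that ⟨m, v₀⟩ = ⟨m, v₁⟩ = ⟨m, e₂⟩ = 1. Then the lattice point w = (0, 1, 1) is a strictly positive rational combination of v₀, v₁, e₂, and ⟨m, w⟩ − 1 = (2−β)/α < 0. -/

import Mathlib

open Matrix

/-- Discrepancy computation in Proposition 2.2: for `α > β ≥ 3`,
`m = (1, (2−β)/α, 1)` takes value 1 on `v₀, v₁, e₂`, the lattice point
`w = (0,1,1)` is a strictly positive rational combination of `v₀, v₁, e₂`,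
and the discrepancy `⟨m, w⟩ − 1 = (2−β)/α` is negative. -/
theorem stmt10 (α β : ℤ) (hβ : 3 ≤ β) (hαβ : β < α) :
    let v₀ : Fin 3 → ℚ := ![-1, (α : ℚ), (β : ℚ)]
    let v₁ : Fin 3 → ℚ := ![1, 0, 0]
    let e₂ : Fin 3 → ℚ := ![0, 0, 1]
    let m : Fin 3 → ℚ := ![1, (2 - (β : ℚ)) / (α : ℚ), 1]
    let w : Fin 3 → ℚ := ![0, 1, 1]
    (m ⬝ᵥ v₀ = 1 ∧ m ⬝ᵥ v₁ = 1 ∧ m ⬝ᵥ e₂ = 1) ∧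
    (∃ a b c : ℚ, 0 < a ∧ 0 < b ∧ 0 < c ∧ w = a • v₀ + b • v₁ + c • e₂) ∧
    m ⬝ᵥ w - 1 = (2 - (β : ℚ)) / (α : ℚ) ∧ (2 - (β : ℚ)) / (α : ℚ) < 0 := by
  intro v₀ v₁ e₂ m w
  have hα0 : (0:ℚ) < (α:ℚ) := by exact_mod_cast (by linarith : (0:ℤ) < α)
  have hαne : (α:ℚ) ≠ 0 := ne_of_gt hα0
  have hβα : (β:ℚ) < (α:ℚ) := by exact_mod_cast hαβ
  have hβ3 : (3:ℚ) ≤ (β:ℚ) := by exact_mod_cast hβ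
  refine ⟨⟨?_, ?_, ?_⟩, ⟨1/α, 1/α, 1 - β/α, ?_, ?_, ?_, ?_⟩, ?_, ?_⟩
  · simp [m, v₀, dotProduct, Fin.sum_univ_three]
    field_simp
    ring
  · simp [m, v₁, dotProduct, Fin.sum_univ_three]
  · simp [m, e₂, dotProduct, Fin.sum_univ_three]
  · positivity
  · positivity
  · rw [sub_pos, div_lt_one hα0]; exact hβα
  · funext i
    fin_cases i <;>
      simp [w, v₀, v₁, e₂] <;> field_simp <;> ring
  · simp [m, w, dotProduct, Fin.sum_univ_three]
  · apply div_neg_of_neg_of_pos (by linarith) hα0
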